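/- Let k be a perfect field of characteristic p > 0 and A a k-biring that is finite-dimensional as a k-vector space and whose only idempotent elements are 0 and 1. Then the structure map k → A is bijective, i.e., A = k. (This is the claim of Remark 5.7 of the paper: there are no non-trivial finite connected ring schemes over a perfect field, because the Frobenius would be both nilpotent and a map of ring schemes fixing the identity.) -/

import Mathlib

/- A `k`-biring: a commutative `k`-algebra `A` with coaddition, additive counit, antipode,
comultiplication and multiplicative counit, such that for every commutative `k`-algebra `R`
the induced operations make `Hom_{k-alg}(A, R)` a commutative unital ring (equivalently, the
diagrammatic coring/codistributivity axioms hold). -/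

open scoped TensorProduct

/-- The binary operation on `k`-algebra homomorphisms `A →ₐ[k] R` induced by a
comultiplication-type map `Δ : A →ₐ[k] A ⊗[k] A`: `(f, g) ↦ mult ∘ (f ⊗ g) ∘ Δ`. -/
noncomputable def ptOp (k A : Type) [Field k] [CommRing A] [Algebra k A]
    (Δ : A →ₐ[k] A ⊗[k] A) {R : Type} [CommRing R] [Algebra k R]
    (f g : A →ₐ[k] R) : A →ₐ[k] R :=
  (Algebra.TensorProduct.lmul' k (S := R)).comp ((Algebra.TensorProduct.map f g).comp Δ)

/-- The constant point induced by a counit-type map `ε : A →ₐ[k] k`. -/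
noncomputable def ptConst (k A : Type) [Field k] [CommRing A] [Algebra k A]
    (ε : A →ₐ[k] k) {R : Type} [CommRing R] [Algebra k R] : A →ₐ[k] R :=
  (Algebra.ofId k R).comp ε

/-- A `k`-biring structure on the commutative `k`-algebra `A`; equivalently, the structure of
an affine ring scheme on `Spec A` over `k`. -/
structure Biring (k A : Type) [Field k] [CommRing A] [Algebra k A] where
  coadd : A →ₐ[k] A ⊗[k] A
  counitAdd : A →ₐ[k] k
  antipode : A →ₐ[k] A
  comul : A →ₐ[k] A ⊗[k] A
  counitMul : A →ₐ[k] k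
  pt_add_assoc : ∀ (R : Type) [CommRing R] [Algebra k R] (f g h : A →ₐ[k] R),
    ptOp k A coadd (ptOp k A coadd f g) h = ptOp k A coadd f (ptOp k A coadd g h)
  pt_add_comm : ∀ (R : Type) [CommRing R] [Algebra k R] (f g : A →ₐ[k] R),
    ptOp k A coadd f g = ptOp k A coadd g f
  pt_zero_add : ∀ (R : Type) [CommRing R] [Algebra k R] (f : A →ₐ[k] R),
    ptOp k A coadd (ptConst k A counitAdd) f = f
  pt_add_neg : ∀ (R : Type) [CommRing R] [Algebra k R] (f : A →ₐ[k] R),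
    ptOp k A coadd f (f.comp antipode) = ptConst k A counitAdd
  pt_mul_assoc : ∀ (R : Type) [CommRing R] [Algebra k R] (f g h : A →ₐ[k] R),
    ptOp k A comul (ptOp k A comul f g) h = ptOp k A comul f (ptOp k A comul g h)
  pt_mul_comm : ∀ (R : Type) [CommRing R] [Algebra k R] (f g : A →ₐ[k] R),
    ptOp k A comul f g = ptOp k A comul g f
  pt_one_mul : ∀ (R : Type) [CommRing R] [Algebra k R] (f : A →ₐ[k] R),
    ptOp k A comul (ptConst k A counitMul) f = f
  pt_mul_add : ∀ (R : Type) [CommRing R] [Algebra k R] (f g h : A →ₐ[k] R),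
    ptOp k A comul f (ptOp k A coadd g h)
      = ptOp k A coadd (ptOp k A comul f g) (ptOp k A comul f h)


open Polynomial in
/-- In a finite-dimensional connected commutative algebra over a field, any element killed
by an algebra homomorphism to `k` is nilpotent. -/
theorem nilpotent_of_counit_eq_zero {k A : Type} [Field k] [CommRing A] [Algebra k A]
    [FiniteDimensional k A] (hconn : ∀ e : A, e * e = e → e = 0 ∨ e = 1)
    (ε : A →ₐ[k] k) (x : A) (hx : ε x = 0) : IsNilpotent x := by
  have hint : IsIntegral k x := IsIntegral.of_finite k x
  have hf0 : minpoly k x ≠ 0 := minpoly.ne_zero hint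
  have haev : aeval x (minpoly k x) = 0 := minpoly.aeval k x
  have hroot : (minpoly k x).IsRoot 0 := by
    have h := aeval_algHom_apply ε x (minpoly k x)
    rw [haev, map_zero, hx] at h
    simpa [Polynomial.IsRoot, aeval_def, eval] using h
  set m := (minpoly k x).rootMultiplicity 0 with hmdef
  have hm : 0 < m := (rootMultiplicity_pos hf0).mpr hroot
  obtain ⟨g, hfg, hgnd⟩ :=
    (minpoly k x).exists_eq_pow_rootMultiplicity_mul_and_not_dvd hf0 0
  have hco : IsCoprime ((X - C 0 : k[X]) ^ m) g :=
    (((irreducible_X_sub_C (0 : k)).coprime_iff_not_dvd).mpr hgnd).pow_left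
  obtain ⟨u, v, huv⟩ := hco
  have h1 : aeval x u * x ^ m + aeval x v * aeval x g = 1 := by
    have h := congrArg (aeval x) huv
    simpa [map_add, map_mul, map_pow, map_sub, map_one] using h
  have h2 : x ^ m * aeval x g = 0 := by
    have h := congrArg (aeval x) hfg
    rw [haev] at h
    simpa [map_mul, map_pow, map_sub] using h.symm
  have hab : (aeval x u * x ^ m) * (aeval x v * aeval x g) = 0 := by
    calc (aeval x u * x ^ m) * (aeval x v * aeval x g)
        = aeval x u * aeval x v * (x ^ m * aeval x g) := by ring
      _ = 0 := by rw [h2, mul_zero]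
  have hidem : (aeval x u * x ^ m) * (aeval x u * x ^ m) = aeval x u * x ^ m := by
    calc (aeval x u * x ^ m) * (aeval x u * x ^ m)
        = (aeval x u * x ^ m) * ((aeval x u * x ^ m) + aeval x v * aeval x g)
          - (aeval x u * x ^ m) * (aeval x v * aeval x g) := by ring
      _ = aeval x u * x ^ m := by rw [h1, hab]; ring
  rcases hconn _ hidem with ha | ha
  · have hb1 : aeval x v * aeval x g = 1 := by rw [ha, zero_add] at h1; exact h1
    refine ⟨m, ?_⟩
    calc x ^ m = x ^ m * (aeval x v * aeval x g) := by rw [hb1, mul_one]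
      _ = aeval x v * (x ^ m * aeval x g) := by ring
      _ = 0 := by rw [h2, mul_zero]
  · exfalso
    have hux : IsUnit x := by
      refine IsUnit.of_mul_eq_one (a := x) (aeval x u * x ^ (m - 1)) ?_
      have hm1 : m - 1 + 1 = m := Nat.succ_pred_eq_of_pos hm
      calc x * (aeval x u * x ^ (m - 1)) = aeval x u * x ^ (m - 1 + 1) := by ring
        _ = 1 := by rw [hm1]; exact ha
    exact not_isUnit_zero (hx ▸ hux.map ε)

/-- **Remark 5.7**: there are no non-trivial finite connected ring schemes over a perfect
field of characteristic `p > 0`: if `A` is a `k`-biring which is finite-dimensional as a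
`k`-vector space and whose only idempotents are `0` and `1`, then `A = k`. -/
theorem finite_connected_biring_trivial
    (k A : Type) [Field k] (p : ℕ) [Fact p.Prime] [CharP k p] [PerfectField k]
    [CommRing A] [Algebra k A] (B : Biring k A)
    [FiniteDimensional k A]
    (hconn : ∀ e : A, e * e = e → e = 0 ∨ e = 1) :
    Function.Bijective (algebraMap k A) := by
  -- Step 1: the additive and multiplicative counits agree, since `A` is local with
  -- maximal ideal `ker counitAdd` consisting of nilpotents.
  have hce : B.counitMul = B.counitAdd := by
    apply AlgHom.ext
    intro a
    have hx : B.counitAdd (a - algebraMap k A (B.counitAdd a)) = 0 := by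
      simp
    have hnil : IsNilpotent (B.counitMul (a - algebraMap k A (B.counitAdd a))) :=
      (nilpotent_of_counit_eq_zero hconn B.counitAdd _ hx).map B.counitMul
    have h0 := hnil.eq_zero
    rw [map_sub, AlgHom.commutes] at h0
    have : B.counitMul a - B.counitAdd a = 0 := by simpa using h0
    exact sub_eq_zero.mp this
  -- Step 2: since the zero point equals the one point, every `A`-point of `Spec A`
  -- equals the constant zero point.
  have hzz : ptOp k A B.coadd (ptConst k A B.counitAdd) (ptConst k A B.counitAdd)
      = ptConst k A B.counitAdd := B.pt_zero_add A _
  have key : ∀ f : A →ₐ[k] A, f = ptConst k A B.counitAdd := by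
    intro f
    have hmulz : ptOp k A B.comul f (ptConst k A B.counitAdd) = ptConst k A B.counitAdd := by
      have hww : ptOp k A B.comul f (ptConst k A B.counitAdd)
          = ptOp k A B.coadd (ptOp k A B.comul f (ptConst k A B.counitAdd))
              (ptOp k A B.comul f (ptConst k A B.counitAdd)) := by
        have h := B.pt_mul_add A f (ptConst k A B.counitAdd) (ptConst k A B.counitAdd)
        rw [hzz] at h
        exact h
      set w := ptOp k A B.comul f (ptConst k A B.counitAdd) with hwdef
      have hneg := B.pt_add_neg A w
      have hzw : ptConst k A B.counitAdd = w := by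
        calc ptConst k A B.counitAdd
            = ptOp k A B.coadd w (w.comp B.antipode) := hneg.symm
          _ = ptOp k A B.coadd (ptOp k A B.coadd w w) (w.comp B.antipode) := by rw [← hww]
          _ = ptOp k A B.coadd w (ptOp k A B.coadd w (w.comp B.antipode)) :=
              B.pt_add_assoc A w w _
          _ = ptOp k A B.coadd w (ptConst k A B.counitAdd) := by rw [hneg]
          _ = ptOp k A B.coadd (ptConst k A B.counitAdd) w := B.pt_add_comm A w _
          _ = w := B.pt_zero_add A w
      exact hzw.symm
    calc f = ptOp k A B.comul (ptConst k A B.counitMul) f := (B.pt_one_mul A f).symm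
      _ = ptOp k A B.comul (ptConst k A B.counitAdd) f := by rw [hce]
      _ = ptOp k A B.comul f (ptConst k A B.counitAdd) := B.pt_mul_comm A _ f
      _ = ptConst k A B.counitAdd := hmulz
  -- Step 3: the identity of `A` factors through `k`.
  have hid := key (AlgHom.id k A)
  constructor
  · intro c d h
    simpa using congrArg B.counitAdd h
  · intro a
    refine ⟨B.counitAdd a, ?_⟩
    have := AlgHom.congr_fun hid a
    simp only [AlgHom.id_apply, ptConst, AlgHom.comp_apply, Algebra.ofId_apply] at this
    exact this.symm
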